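/- Let G be a finite group, p a prime dividing |G|, and P a Sylow p-subgroup of G. The following three statements are equivalent: (a) the commuting graph Γ_p on the set of elements of G of order p is connected; (b) G has no strongly p-embedded subgroup; (c) G = ⟨ N_G(Y) : Y a nontrivial subgroup of P ⟩. -/

import Mathlib

open SimpleGraph

/-- The commuting graph on a subset `X` of a group `G`: vertices are the elements of `X`,
and two distinct vertices are adjacent iff they commute. -/
def commGraph {G : Type*} [Group G] (X : Set G) : SimpleGraph X where
  Adj a b := a ≠ b ∧ (a : G) * (b : G) = (b : G) * (a : G)
  symm := ⟨fun a b h => ⟨h.1.symm, h.2.symm⟩⟩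
  loopless := ⟨fun a h => h.1 rfl⟩

/-- The connected component of `x` in the commuting graph on `X`, viewed as a subset of `G`. -/
def compSet {G : Type*} [Group G] (X : Set G) (x : G) (hx : x ∈ X) : Set G :=
  {y : G | ∃ hy : y ∈ X, (commGraph X).Reachable ⟨x, hx⟩ ⟨y, hy⟩}

/-- The stabilizer `H_x` in `G` of the connected component of `x` in the commuting graph on `X`,
under the conjugation action. -/
def conjStab {G : Type*} [Group G] (X : Set G) (x : G) (hx : x ∈ X) : Set G :=
  {g : G | (fun y => g⁻¹ * y * g) '' compSet X x hx = compSet X x hx}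

/-- A subgroup `U` of `G` is strongly `p`-embedded if `U ≠ G`, `p` divides `|U|`, and
`p` does not divide `|U ∩ g⁻¹Ug|` for every `g ∈ G \ U`. -/
def IsStronglyPEmbedded {G : Type*} [Group G] (p : ℕ) (U : Subgroup G) : Prop :=
  U ≠ ⊤ ∧ p ∣ Nat.card U ∧
    ∀ g : G, g ∉ U → ¬ p ∣ Nat.card ((U : Set G) ∩ ((fun y => g⁻¹ * y * g) '' (U : Set G)) : Set G)

set_option linter.unusedVariables false
set_option linter.unusedSectionVars false
set_option maxHeartbeats 1000000

namespace BenderAux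

open Subgroup Pointwise


variable {G : Type*} [Group G]

/-- conjugation `x ↦ g⁻¹ x g` -/
def cj (g x : G) : G := g⁻¹ * x * g

/-- conjugate subgroup `Q^g = g⁻¹ Q g` -/
def cjS (g : G) (Q : Subgroup G) : Subgroup G := Q.map (MulAut.conj g⁻¹).toMonoidHom

lemma cj_cj (g h x : G) : cj h (cj g x) = cj (g * h) x := by
  simp [cj, mul_assoc]

lemma cj_one (x : G) : cj 1 x = x := by simp [cj]

lemma cj_mul (g x y : G) : cj g x * cj g y = cj g (x * y) := by
  simp [cj, mul_assoc]

lemma orderOf_cj (g x : G) : orderOf (cj g x) = orderOf x :=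
  (SemiconjBy.orderOf_eq g⁻¹ (show g⁻¹ * x = (g⁻¹ * x * g) * g⁻¹ by group)).symm

lemma mem_cjS {g x : G} {Q : Subgroup G} : x ∈ cjS g Q ↔ g * x * g⁻¹ ∈ Q := by
  simp only [cjS, Subgroup.mem_map, MulEquiv.coe_toMonoidHom, MulAut.conj_apply, inv_inv]
  constructor
  · rintro ⟨q, hq, rfl⟩
    have : g * (g⁻¹ * q * g) * g⁻¹ = q := by group
    rwa [this]
  · intro h
    exact ⟨g * x * g⁻¹, h, by group⟩

lemma cjS_cjS (g h : G) (Q : Subgroup G) : cjS h (cjS g Q) = cjS (g * h) Q := by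
  ext x
  rw [mem_cjS, mem_cjS, mem_cjS, show g * (h * x * h⁻¹) * g⁻¹ = (g * h) * x * (g * h)⁻¹ by group]

lemma cjS_one (Q : Subgroup G) : cjS 1 Q = Q := by
  ext x; rw [mem_cjS]; simp

lemma cjS_mono {Q R : Subgroup G} (g : G) (h : Q ≤ R) : cjS g Q ≤ cjS g R :=
  Subgroup.map_mono h

lemma card_cjS (g : G) (Q : Subgroup G) : Nat.card (cjS g Q) = Nat.card Q :=
  (Nat.card_congr (Q.equivMapOfInjective _ (MulAut.conj g⁻¹).injective).toEquiv).symm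

lemma normalizer_cjS (g : G) (Q : Subgroup G) :
    Subgroup.normalizer (cjS g Q : Set G) = cjS g (Subgroup.normalizer (Q : Set G)) :=
  (Subgroup.map_equiv_normalizer_eq Q (MulAut.conj g⁻¹)).symm

lemma cjS_eq_bot {g : G} {Q : Subgroup G} : cjS g Q = ⊥ ↔ Q = ⊥ :=
  Subgroup.map_eq_bot_iff_of_injective Q (MulAut.conj g⁻¹).injective

lemma cjS_zpowers (g x : G) : cjS g (Subgroup.zpowers x) = Subgroup.zpowers (cj g x) := by
  rw [cjS, MonoidHom.map_zpowers]
  congr 1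
  simp [cj, MulAut.conj_apply]

lemma cjS_le_iff {g : G} {Q R : Subgroup G} : cjS g Q ≤ R ↔ ∀ q ∈ Q, g⁻¹ * q * g ∈ R := by
  constructor
  · intro h q hq
    apply h
    rw [mem_cjS, show g * (g⁻¹ * q * g) * g⁻¹ = q by group]
    exact hq
  · intro h x hx
    rw [mem_cjS] at hx
    have := h _ hx
    rwa [show g⁻¹ * (g * x * g⁻¹) * g = x by group] at this

lemma mem_cjS_of_mem {g q : G} {Q : Subgroup G} (hq : q ∈ Q) : g⁻¹ * q * g ∈ cjS g Q := by
  rw [mem_cjS, show g * (g⁻¹ * q * g) * g⁻¹ = q by group]; exact hq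

lemma mem_normalizer_of_cjS_eq {g : G} {Q : Subgroup G} (h : cjS g Q = Q) :
    g ∈ Subgroup.normalizer (Q : Set G) := by
  rw [Subgroup.mem_normalizer_iff]
  intro x
  rw [← mem_cjS (g := g), h]

lemma mem_normalizer_zpowers_of_commute {x a : G} (h : x * a = a * x) :
    a ∈ Subgroup.normalizer (Subgroup.zpowers x : Set G) := by
  apply mem_normalizer_of_cjS_eq
  rw [cjS_zpowers, show cj a x = x from by rw [cj, mul_assoc, h, inv_mul_cancel_left]]

lemma eq_of_le_of_card_le' [Finite G] {H K : Subgroup G} (h : H ≤ K)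
    (hc : Nat.card K ≤ Nat.card H) : H = K := by
  apply SetLike.coe_injective
  refine (Set.eq_of_subset_of_ncard_le h ?_ (Set.toFinite _)).symm.symm
  rwa [← Nat.card_coe_set_eq, ← Nat.card_coe_set_eq, SetLike.coe_sort_coe,
    SetLike.coe_sort_coe]

lemma card_le_of_le [Finite G] {H K : Subgroup G} (h : H ≤ K) :
    Nat.card H ≤ Nat.card K :=
  Nat.le_of_dvd Nat.card_pos (Subgroup.card_dvd_of_le h)

lemma embSet_eq (U : Subgroup G) (g : G) :
    ((U : Set G) ∩ ((fun y => g⁻¹ * y * g) '' (U : Set G)) : Set G) = ((U ⊓ cjS g U : Subgroup G) : Set G) := by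
  rw [Subgroup.coe_inf, cjS, Subgroup.coe_map]
  have : ⇑(MulAut.conj g⁻¹).toMonoidHom = fun y => g⁻¹ * y * g := by
    funext y; simp [MulAut.conj_apply]
  rw [this]

lemma p_dvd_card_of_mem {p : ℕ} {W : Subgroup G} {x : G} (hx : x ∈ W)
    (hox : orderOf x = p) : p ∣ Nat.card W := by
  have h1 : Subgroup.zpowers x ≤ W := (Subgroup.zpowers_le).mpr hx
  have := Subgroup.card_dvd_of_le h1
  rwa [Nat.card_zpowers, hox] at this

lemma ne_one_of_orderOf {p : ℕ} (hp : p.Prime) {x : G} (hox : orderOf x = p) : x ≠ 1 := by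
  intro h
  rw [h, orderOf_one] at hox
  exact hp.ne_one hox.symm

lemma exists_pow_orderOf_eq_prime [Finite G] {p : ℕ} (hp : p.Prime) {Q : Subgroup G}
    (hQ : IsPGroup p Q) {x : G} (hx : x ∈ Q) (hx1 : x ≠ 1) :
    ∃ n : ℕ, orderOf (x ^ n) = p := by
  obtain ⟨k, hk⟩ := hQ ⟨x, hx⟩
  have hxk : x ^ (p ^ k) = 1 := by
    have : ((⟨x, hx⟩ : Q) ^ (p ^ k) : Q) = (1 : Q) := hk
    have := congrArg (Subtype.val) this
    simpa using this
  have hdvd : orderOf x ∣ p ^ k := orderOf_dvd_of_pow_eq_one hxk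
  obtain ⟨j, hjk, hj⟩ := (Nat.dvd_prime_pow hp).mp hdvd
  have hj0 : j ≠ 0 := by
    rintro rfl
    rw [pow_zero] at hj
    exact hx1 (orderOf_eq_one_iff.mp hj)
  refine ⟨p ^ (j - 1), ?_⟩
  rw [orderOf_pow, hj]
  rw [Nat.gcd_eq_right (pow_dvd_pow p (Nat.sub_le j 1)),
    Nat.pow_div (Nat.sub_le j 1) hp.pos, Nat.sub_sub_self (Nat.one_le_iff_ne_zero.mpr hj0),
    pow_one]

lemma isPGroup_zpowers {p : ℕ} (hp : p.Prime) [Finite G] {x : G} (hox : orderOf x = p) :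
    IsPGroup p (Subgroup.zpowers x) := by
  haveI : Fact p.Prime := ⟨hp⟩
  rw [IsPGroup.iff_card]
  exact ⟨1, by rw [Nat.card_zpowers, hox, pow_one]⟩


/-- `rel p a b` : `a` and `b` have order `p` and are connected in the commuting graph. -/
def rel (p : ℕ) (a b : G) : Prop :=
  ∃ (ha : orderOf a = p) (hb : orderOf b = p),
    (commGraph {x : G | orderOf x = p}).Reachable ⟨a, ha⟩ ⟨b, hb⟩

variable {p : ℕ}

lemma rel_def {a b : G} : rel p a b ↔ ∃ (ha : orderOf a = p) (hb : orderOf b = p),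
    (commGraph {x : G | orderOf x = p}).Reachable ⟨a, ha⟩ ⟨b, hb⟩ := Iff.rfl

lemma rel_refl {a : G} (ha : orderOf a = p) : rel p a a := ⟨ha, ha, Reachable.refl _⟩

lemma rel.symm {a b : G} (h : rel p a b) : rel p b a := by
  obtain ⟨ha, hb, hr⟩ := h
  exact ⟨hb, ha, hr.symm⟩

lemma rel.trans {a b c : G} (h1 : rel p a b) (h2 : rel p b c) : rel p a c := by
  obtain ⟨ha, hb, hr⟩ := h1
  obtain ⟨hb2, hc, hr2⟩ := h2
  exact ⟨ha, hc, hr.trans hr2⟩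

lemma rel_of_commute {a b : G} (ha : orderOf a = p) (hb : orderOf b = p)
    (h : a * b = b * a) : rel p a b := by
  by_cases hab : a = b
  · subst hab; exact rel_refl ha
  · refine ⟨ha, hb, Adj.reachable ?_⟩
    exact ⟨fun hh => hab (congrArg Subtype.val hh), h⟩

lemma rel.conj {a b : G} (g : G) (h : rel p a b) : rel p (cj g a) (cj g b) := by
  obtain ⟨ha, hb, hr⟩ := h
  refine ⟨(orderOf_cj g a).trans ha, (orderOf_cj g b).trans hb, ?_⟩
  let f : (commGraph {x : G | orderOf x = p}) →g (commGraph {x : G | orderOf x = p}) :=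
    { toFun := fun v => ⟨cj g v.1, (orderOf_cj g v.1).trans v.2⟩
      map_rel' := by
        rintro u v ⟨hne, hcomm⟩
        constructor
        · intro hh
          apply hne
          have h1 : cj g u.1 = cj g v.1 := congrArg Subtype.val hh
          have h2 := congrArg (cj g⁻¹) h1
          rw [cj_cj, cj_cj, mul_inv_cancel, cj_one, cj_one] at h2
          exact Subtype.ext h2
        · show cj g u.1 * cj g v.1 = cj g v.1 * cj g u.1
          rw [cj_mul, cj_mul, hcomm] }
  exact hr.map f

/-- Walk induction principle for `rel`. -/
lemma rel.rec' {C : G → Prop}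
    (hC : ∀ u v : G, orderOf u = p → orderOf v = p → u * v = v * u → C u → C v)
    {a b : G} (h : rel p a b) (ha : C a) : C b := by
  obtain ⟨hoa, hob, hr⟩ := h
  obtain ⟨w⟩ := hr
  have aux : ∀ (u v : {x : G | orderOf x = p}) (_ : (commGraph _).Walk u v), C u.1 → C v.1 := by
    intro u v w
    induction w with
    | nil => exact id
    | @cons u2 v2 w2 hadj _ ih =>
        intro hcu
        exact ih (hC _ _ u2.2 v2.2 hadj.2 hcu)
  exact aux _ _ w ha

variable [Finite G]

/-- conjugating a `p`-subgroup `S` of `K` into a subgroup `R ≤ K` which is "Sylow in `K`",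
by an element of `K`. -/
lemma conj_into [Fact p.Prime] {K R S : Subgroup G} (hRK : R ≤ K)
    (hT : ∃ T : Sylow p K, (T : Subgroup K) = R.subgroupOf K)
    (hS : IsPGroup p S) (hSK : S ≤ K) :
    ∃ k ∈ K, ∀ s ∈ S, k⁻¹ * s * k ∈ R := by
  obtain ⟨T, hT⟩ := hT
  have hS' : IsPGroup p (S.subgroupOf K) :=
    hS.of_equiv (Subgroup.subgroupOfEquivOfLe hSK).symm
  obtain ⟨Q, hQ⟩ := hS'.exists_le_sylow
  obtain ⟨k, hk⟩ := MulAction.exists_smul_eq (↥K) T Q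
  refine ⟨k, k.2, fun s hs => ?_⟩
  have h1 : (⟨s, hSK hs⟩ : K) ∈ (Q : Subgroup K) := hQ (Subgroup.mem_subgroupOf.mpr hs)
  rw [← hk] at h1
  rw [Sylow.coe_subgroup_smul] at h1
  have h2 := Subgroup.mem_pointwise_smul_iff_inv_smul_mem.mp h1
  rw [hT] at h2
  have h3 := Subgroup.mem_subgroupOf.mp h2
  have : ((((MulAut.conj k)⁻¹ : MulAut K) • (⟨s, hSK hs⟩ : K) : K) : G) = k⁻¹ * s * k := by
    rw [← map_inv (MulAut.conj (G := ↥K)) k]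
    show (((MulAut.conj (k⁻¹ : ↥K)) (⟨s, hSK hs⟩ : K) : K) : G) = _
    rw [MulAut.conj_apply]
    push_cast
    group
  rwa [this] at h3

lemma P_sylowIn (P : Sylow p G) {K : Subgroup G} (hPK : (P : Subgroup G) ≤ K) :
    ∃ T : Sylow p K, (T : Subgroup K) = (P : Subgroup G).subgroupOf K :=
  ⟨P.subtype hPK, Sylow.coe_subtype P hPK⟩


/-- The subgroup generated by normalizers of nontrivial subgroups of `P`. -/
def MM (p : ℕ) (P : Sylow p G) : Subgroup G :=
  ⨆ Y ∈ {Y : Subgroup G | Y ≠ ⊥ ∧ Y ≤ (P : Subgroup G)}, Subgroup.normalizer (Y : Set G)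

lemma norm_le_MM {P : Sylow p G} {Y : Subgroup G} (hY : Y ≠ ⊥) (hYP : Y ≤ (P : Subgroup G)) :
    Subgroup.normalizer (Y : Set G) ≤ MM p P :=
  le_biSup (fun Y : Subgroup G => Subgroup.normalizer (Y : Set G))
    (show Y ∈ {Y : Subgroup G | Y ≠ ⊥ ∧ Y ≤ (P : Subgroup G)} from ⟨hY, hYP⟩)

lemma P_le_MM {P : Sylow p G} (hPb : (P : Subgroup G) ≠ ⊥) : (P : Subgroup G) ≤ MM p P :=
  le_trans Subgroup.le_normalizer (norm_le_MM hPb le_rfl)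

/-- Key lemma: every nontrivial subgroup of `P` can be conjugated, by an element of `MM p P`,
to a subgroup `Q'` of `P` such that `P ⊓ N_G(Q')` is a Sylow `p`-subgroup of `N_G(Q')`. -/
lemma fully_normalized [Fact p.Prime] (P : Sylow p G) (hPb : (P : Subgroup G) ≠ ⊥)
    {Q : Subgroup G} (hQb : Q ≠ ⊥) (hQP : Q ≤ (P : Subgroup G)) :
    ∃ m ∈ MM p P, cjS m Q ≤ (P : Subgroup G) ∧
      ∃ T : Sylow p (Subgroup.normalizer (cjS m Q : Set G)),
        (T : Subgroup (Subgroup.normalizer (cjS m Q : Set G))) =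
          ((P : Subgroup G) ⊓ Subgroup.normalizer (cjS m Q : Set G)).subgroupOf (Subgroup.normalizer (cjS m Q : Set G)) := by
  classical
  set A : Set G := {m : G | m ∈ MM p P ∧ cjS m Q ≤ (P : Subgroup G)} with hA
  have hA1 : (1 : G) ∈ A := ⟨Subgroup.one_mem _, by rw [cjS_one]; exact hQP⟩
  obtain ⟨m, hmA, hmax⟩ := Set.exists_max_image A
    (fun m => Nat.card ((P : Subgroup G) ⊓ Subgroup.normalizer (cjS m Q : Set G) : Subgroup G))
    (Set.toFinite A) ⟨1, hA1⟩
  obtain ⟨hmM, hmP⟩ := hmA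
  set Q' : Subgroup G := cjS m Q with hQ'
  set N : Subgroup G := Subgroup.normalizer (Q' : Set G) with hN
  set R : Subgroup G := (P : Subgroup G) ⊓ N with hR
  have hQ'b : Q' ≠ ⊥ := fun h => hQb (cjS_eq_bot.mp h)
  have hQ'N : Q' ≤ N := Subgroup.le_normalizer
  have hQ'R : Q' ≤ R := le_inf hmP hQ'N
  have hNM : N ≤ MM p P := norm_le_MM hQ'b hmP
  -- R.subgroupOf N is a p-group
  have hRp : IsPGroup p R := P.2.to_le inf_le_left
  have hRp' : IsPGroup p (R.subgroupOf N) :=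
    hRp.of_equiv (Subgroup.subgroupOfEquivOfLe inf_le_right).symm
  obtain ⟨Q₀, hQ₀⟩ := hRp'.exists_le_sylow
  set T₀ : Subgroup G := (Q₀ : Subgroup N).map N.subtype with hT₀
  have hT₀N : T₀ ≤ N := by
    rw [hT₀]
    rintro x ⟨y, _, rfl⟩
    exact y.2
  have hT₀p : IsPGroup p T₀ := (Q₀.2).map N.subtype
  have hRT₀ : R ≤ T₀ := by
    intro x hx
    have hxN : x ∈ N := (Subgroup.mem_inf.mp hx).2
    exact ⟨⟨x, hxN⟩, hQ₀ (Subgroup.mem_subgroupOf.mpr hx), rfl⟩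
  have hT₀M : T₀ ≤ MM p P := le_trans hT₀N hNM
  -- conjugate T₀ into P inside MM
  obtain ⟨h, hhM, hh⟩ := conj_into (p := p) (P_le_MM hPb) (P_sylowIn P (P_le_MM hPb)) hT₀p hT₀M
  have hchT₀ : cjS h T₀ ≤ (P : Subgroup G) := cjS_le_iff.mpr hh
  -- m * h is in A
  have hmh : m * h ∈ A := by
    refine ⟨Subgroup.mul_mem _ hmM hhM, ?_⟩
    rw [← cjS_cjS]
    exact le_trans (cjS_mono h (le_trans hQ'R hRT₀)) hchT₀
  -- cardinalities
  have hcard1 : Nat.card (R.subgroupOf N) = Nat.card R :=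
    Nat.card_congr (Subgroup.subgroupOfEquivOfLe inf_le_right).toEquiv
  have hcard2 : Nat.card T₀ = Nat.card (Q₀ : Subgroup N) :=
    (Nat.card_congr ((Q₀ : Subgroup N).equivMapOfInjective N.subtype N.subtype_injective).toEquiv).symm
  have hchNle : cjS h T₀ ≤ (P : Subgroup G) ⊓ Subgroup.normalizer (cjS (m * h) Q : Set G) := by
    refine le_inf hchT₀ ?_
    rw [← cjS_cjS, ← hQ', normalizer_cjS, ← hN]
    exact cjS_mono h hT₀N
  have hle1 : Nat.card T₀ ≤ Nat.card ((P : Subgroup G) ⊓ Subgroup.normalizer (cjS (m * h) Q : Set G) : Subgroup G) := by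
    rw [← card_cjS h T₀]
    exact card_le_of_le hchNle
  have hle2 := hmax _ hmh
  have hle3 : Nat.card (Q₀ : Subgroup N) ≤ Nat.card (R.subgroupOf N) := by
    rw [hcard1, ← hcard2]
    calc Nat.card T₀ ≤ _ := hle1
      _ ≤ Nat.card R := hle2
  have heq : R.subgroupOf N = (Q₀ : Subgroup N) := eq_of_le_of_card_le' hQ₀ hle3
  exact ⟨m, hmM, hmP, ⟨Q₀, heq.symm⟩⟩


/-- Cauchy's theorem inside a subgroup. -/
lemma exists_mem_orderOf_eq (hp : p.Prime) {K : Subgroup G} (h : p ∣ Nat.card K) :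
    ∃ x ∈ K, orderOf x = p := by
  haveI : Fact p.Prime := ⟨hp⟩
  haveI := Fintype.ofFinite ↥K
  rw [Nat.card_eq_fintype_card] at h
  obtain ⟨x, hx⟩ := exists_prime_orderOf_dvd_card p h
  refine ⟨x.1, x.2, ?_⟩
  rw [← hx]
  exact orderOf_injective K.subtype K.subtype_injective x

/-- a nontrivial finite `p`-group contains a central element of order `p`. -/
lemma exists_central_orderOf (hp : p.Prime) {Q : Subgroup G} (hQ : IsPGroup p Q)
    (hnt : Nontrivial Q) : ∃ z : G, z ∈ Q ∧ orderOf z = p ∧ ∀ q ∈ Q, z * q = q * z := by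
  haveI : Fact p.Prime := ⟨hp⟩
  haveI := hnt
  haveI : Nontrivial (Subgroup.center Q) := hQ.center_nontrivial
  obtain ⟨c, hc1⟩ := exists_ne (1 : Subgroup.center Q)
  have hc0 : ((c : Q) : G) ∈ Q := (c : Q).2
  have hc0ne : ((c : Q) : G) ≠ 1 := by
    intro hh
    exact hc1 (Subtype.ext (Subtype.ext hh))
  have hcomm : ∀ q ∈ Q, ((c : Q) : G) * q = q * ((c : Q) : G) := by
    intro q hq
    have h1 := (Subgroup.mem_center_iff.mp c.2) ⟨q, hq⟩
    exact (congrArg Subtype.val h1).symm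
  obtain ⟨n, hn⟩ := exists_pow_orderOf_eq_prime hp hQ hc0 hc0ne
  refine ⟨((c : Q) : G) ^ n, Subgroup.pow_mem Q hc0 n, hn, ?_⟩
  intro q hq
  exact ((Commute.pow_left (hcomm q hq) n))

/-- Elements of order `p` in a common `p`-subgroup are connected. -/
lemma rel_of_pGroup (hp : p.Prime) {Q : Subgroup G} (hQ : IsPGroup p Q) {x y : G}
    (hx : x ∈ Q) (hy : y ∈ Q) (hox : orderOf x = p) (hoy : orderOf y = p) : rel p x y := by
  have hx1 : x ≠ 1 := ne_one_of_orderOf hp hox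
  have hnt : Nontrivial Q :=
    ⟨⟨⟨x, hx⟩, 1, fun hh => hx1 (by simpa using congrArg Subtype.val hh)⟩⟩
  obtain ⟨z, hzQ, hoz, hzc⟩ := exists_central_orderOf hp hQ hnt
  have h1 : x * z = z * x := (hzc x hx).symm
  have h2 : z * y = y * z := hzc y hy
  exact (rel_of_commute hox hoz h1).trans (rel_of_commute hoz hoy h2)

/-- Crux step: if `x` can be conjugated into `P` by an element of `M`, and `y` commutes
with `x`, then `y` can be conjugated into `P` by an element of `M`. -/
lemma crux_step (hp : p.Prime) [Fact p.Prime] (P : Sylow p G) (hPb : (P : Subgroup G) ≠ ⊥)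
    {x y : G} (hox : orderOf x = p) (hoy : orderOf y = p) (hcomm : x * y = y * x)
    (hx : ∃ m ∈ MM p P, cj m x ∈ (P : Subgroup G)) :
    ∃ m ∈ MM p P, cj m y ∈ (P : Subgroup G) := by
  obtain ⟨m, hmM, hmxP⟩ := hx
  set x' := cj m x with hx'
  have hox' : orderOf x' = p := by rw [hx', orderOf_cj]; exact hox
  have hQb : Subgroup.zpowers x' ≠ ⊥ :=
    fun hh => ne_one_of_orderOf hp hox' (Subgroup.zpowers_eq_bot.mp hh)
  obtain ⟨m₂, hm₂M, hQ'P, hT⟩ :=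
    fully_normalized P hPb hQb (Subgroup.zpowers_le.mpr hmxP)
  set N : Subgroup G := Subgroup.normalizer (cjS m₂ (Subgroup.zpowers x') : Set G) with hN
  have hNM : N ≤ MM p P := norm_le_MM (fun hh => hQb (cjS_eq_bot.mp hh)) hQ'P
  set x'' := cj m₂ x' with hx''
  set y'' := cj (m * m₂) y with hy''
  have hcomm'' : x'' * y'' = y'' * x'' := by
    rw [hx'', hx', cj_cj, hy'', cj_mul, cj_mul, hcomm]
  have hoy'' : orderOf y'' = p := by rw [hy'', orderOf_cj]; exact hoy
  have hSN : Subgroup.zpowers y'' ≤ N := by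
    rw [hN, cjS_zpowers]
    exact Subgroup.zpowers_le.mpr (mem_normalizer_zpowers_of_commute hcomm'')
  obtain ⟨n, hnN, hn⟩ := conj_into (inf_le_right : (P : Subgroup G) ⊓ N ≤ N) hT
    (isPGroup_zpowers hp hoy'') hSN
  refine ⟨m * m₂ * n, ?_, ?_⟩
  · exact Subgroup.mul_mem _ (Subgroup.mul_mem _ hmM hm₂M) (hNM hnN)
  · have h1 := hn y'' (Subgroup.mem_zpowers y'')
    have h2 : cj n y'' = cj (m * m₂ * n) y := by rw [hy'', cj_cj]
    have h3 : cj n y'' ∈ (P : Subgroup G) ⊓ N := h1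
    rw [h2] at h3
    exact (Subgroup.mem_inf.mp h3).1


/-- The stabilizer of the connected component of `z`. -/
def relStab (p : ℕ) (z : G) : Subgroup G where
  carrier := {g : G | ∀ y : G, rel p z y ↔ rel p z (cj g y)}
  one_mem' := by intro y; rw [cj_one]
  mul_mem' := by
    intro a b ha hb y
    rw [show cj (a * b) y = cj b (cj a y) from (cj_cj a b y).symm]
    exact (ha y).trans (hb (cj a y))
  inv_mem' := by
    intro a ha y
    have h2 := ha (cj a⁻¹ y)
    rw [cj_cj, inv_mul_cancel, cj_one] at h2
    exact h2.symm

lemma mem_relStab_of_rel {z g : G} (hz : orderOf z = p) (h : rel p z (cj g z)) :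
    g ∈ relStab p z := by
  intro y
  constructor
  · intro hy
    exact h.trans (hy.conj g)
  · intro hy
    have h1 : rel p (cj g⁻¹ z) y := by
      have := hy.conj g⁻¹; rwa [cj_cj, mul_inv_cancel, cj_one] at this
    have h2 : rel p (cj g⁻¹ z) z := by
      have := h.conj g⁻¹; rwa [cj_cj, mul_inv_cancel, cj_one] at this
    exact (h2.symm).trans h1

lemma rel_self_of_mem_relStab {z g : G} (hz : orderOf z = p) (h : g ∈ relStab p z) :
    rel p z (cj g z) := (h z).mp (rel_refl hz)

lemma MM_le_relStab (hp : p.Prime) (P : Sylow p G) {z : G} (hzP : z ∈ (P : Subgroup G))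
    (hoz : orderOf z = p) : MM p P ≤ relStab p z := by
  refine iSup₂_le ?_
  rintro Y ⟨hYb, hYP⟩ g hg
  obtain ⟨y₀, hy₀Y, hy₀ne⟩ := (Subgroup.bot_or_exists_ne_one Y).resolve_left hYb
  have hYp : IsPGroup p Y := P.2.to_le hYP
  obtain ⟨n, hn⟩ := exists_pow_orderOf_eq_prime hp hYp hy₀Y hy₀ne
  set y := y₀ ^ n with hy
  have hyY : y ∈ Y := Subgroup.pow_mem Y hy₀Y n
  have h1 : rel p z y := rel_of_pGroup hp P.2 hzP (hYP hyY) hoz hn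
  have hcy : cj g y ∈ Y := by
    refine (Subgroup.mem_normalizer_iff.mp hg (g⁻¹ * y * g)).mpr ?_
    rw [show g * (g⁻¹ * y * g) * g⁻¹ = y by group]
    exact hyY
  have h2 : rel p z (cj g y) :=
    rel_of_pGroup hp P.2 hzP (hYP hcy) hoz (by rw [orderOf_cj]; exact hn)
  exact mem_relStab_of_rel hoz (h2.trans ((h1.conj g).symm))

lemma P_le_relStab (P : Sylow p G) {z : G} (hoz : orderOf z = p)
    (hzc : ∀ q ∈ (P : Subgroup G), z * q = q * z) : (P : Subgroup G) ≤ relStab p z := by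
  intro g hg
  apply mem_relStab_of_rel hoz
  have : cj g z = z := by rw [cj, mul_assoc, hzc g hg, inv_mul_cancel_left]
  rw [this]
  exact rel_refl hoz

lemma connected_of_relStab_top (hp : p.Prime) [Fact p.Prime] (P : Sylow p G) {z : G}
    (hzP : z ∈ (P : Subgroup G)) (hoz : orderOf z = p) (h : relStab p z = ⊤) :
    (commGraph {x : G | orderOf x = p}).Connected := by
  have key : ∀ y : G, orderOf y = p → rel p z y := by
    intro y hy
    obtain ⟨Q₁, hQ₁⟩ := (isPGroup_zpowers hp hy).exists_le_sylow
    obtain ⟨g, hg⟩ := MulAction.exists_smul_eq G P Q₁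
    have hzQ : cj g⁻¹ z ∈ (Q₁ : Subgroup G) := by
      rw [← hg]
      show cj g⁻¹ z ∈ ((g • P : Sylow p G) : Subgroup G)
      rw [Sylow.coe_subgroup_smul]
      refine Subgroup.mem_pointwise_smul_iff_inv_smul_mem.mpr ?_
      have : (MulAut.conj g)⁻¹ • (cj g⁻¹ z) = z := by
        rw [← map_inv MulAut.conj g]
        show (MulAut.conj g⁻¹) (cj g⁻¹ z) = z
        rw [MulAut.conj_apply, cj]
        group
      rw [this]
      exact hzP
    have h1 : rel p z (cj g⁻¹ z) :=
      rel_self_of_mem_relStab hoz (h ▸ Subgroup.mem_top g⁻¹)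
    have h2 : rel p (cj g⁻¹ z) y :=
      rel_of_pGroup hp Q₁.2 hzQ (hQ₁ (Subgroup.mem_zpowers y))
        (by rw [orderOf_cj]; exact hoz) hy
    exact h1.trans h2
  rw [SimpleGraph.connected_iff]
  constructor
  · intro a b
    have ra := key a.1 a.2
    have rb := key b.1 b.2
    obtain ⟨_, _, wa⟩ := rel_def.mp ra
    obtain ⟨_, _, wb⟩ := rel_def.mp rb
    exact (wa.symm.trans wb)
  · exact ⟨⟨z, hoz⟩⟩

/-- If the component stabilizer is proper, it is strongly `p`-embedded. -/
lemma relStab_embedded (hp : p.Prime) [Fact p.Prime] (P : Sylow p G) {z : G}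
    (hzP : z ∈ (P : Subgroup G)) (hoz : orderOf z = p)
    (hzc : ∀ q ∈ (P : Subgroup G), z * q = q * z)
    (hne : relStab p z ≠ ⊤) : IsStronglyPEmbedded p (relStab p z) := by
  set H := relStab p z with hH
  have hPleH : (P : Subgroup G) ≤ H := P_le_relStab P hoz hzc
  refine ⟨hne, p_dvd_card_of_mem (hPleH hzP) hoz, ?_⟩
  intro g hg hdvd'
  rw [embSet_eq, SetLike.coe_sort_coe] at hdvd'
  obtain ⟨u, hu, hou⟩ := exists_mem_orderOf_eq hp hdvd'
  have huH : u ∈ H := (Subgroup.mem_inf.mp hu).1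
  have hu2 : g * u * g⁻¹ ∈ H := mem_cjS.mp (Subgroup.mem_inf.mp hu).2
  have claim : ∀ v, v ∈ H → orderOf v = p → rel p z v := by
    intro v hv hov
    obtain ⟨k, hkH, hk⟩ := conj_into hPleH (P_sylowIn P hPleH)
      (isPGroup_zpowers hp hov) (Subgroup.zpowers_le.mpr hv)
    have hkv : cj k v ∈ (P : Subgroup G) := hk v (Subgroup.mem_zpowers v)
    have h1 : rel p z (cj k v) :=
      rel_of_pGroup hp P.2 hzP hkv hoz (by rw [orderOf_cj]; exact hov)
    exact (hkH v).mpr h1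
  have r1 : rel p z u := claim u huH hou
  have r2 : rel p z (cj g⁻¹ u) := by
    have : cj g⁻¹ u = g * u * g⁻¹ := by rw [cj, inv_inv]
    rw [this]
    exact claim _ hu2 (by rw [← this, orderOf_cj]; exact hou)
  have r3 : rel p (cj g z) u := by
    have := r2.conj g
    rwa [cj_cj, inv_mul_cancel, cj_one] at this
  have r4 : rel p z (cj g z) := r1.trans r3.symm
  exact hg (mem_relStab_of_rel hoz r4)

/-- A strongly `p`-embedded subgroup forces the commuting graph to be disconnected. -/
lemma not_connected_of_embedded (hp : p.Prime) [Fact p.Prime] {U : Subgroup G}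
    (hU : IsStronglyPEmbedded p U) :
    ¬ (commGraph {x : G | orderOf x = p}).Connected := by
  intro hconn
  obtain ⟨x, hxU, hox⟩ := exists_mem_orderOf_eq hp hU.2.1
  have hg : ∃ g : G, g ∉ U := by
    by_contra hh
    push_neg at hh
    exact hU.1 ((Subgroup.eq_top_iff' U).mpr hh)
  obtain ⟨g, hg⟩ := hg
  have hcl : ∀ b, rel p x b → b ∈ U := by
    intro b hb
    refine rel.rec' ?_ hb hxU
    intro u v hou hov hcomm huU
    by_contra hvU
    apply hU.2.2 v hvU
    rw [embSet_eq, SetLike.coe_sort_coe]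
    refine p_dvd_card_of_mem (Subgroup.mem_inf.mpr ⟨huU, mem_cjS.mpr ?_⟩) hou
    rw [show v * u * v⁻¹ = u by rw [← hcomm, mul_assoc, mul_inv_cancel, mul_one]]
    exact huU
  have hx2 : cj g⁻¹ x ∈ U := by
    refine hcl _ (rel_def.mpr ⟨hox, by rw [orderOf_cj]; exact hox, ?_⟩)
    exact hconn.preconnected _ _
  apply hU.2.2 g hg
  rw [embSet_eq, SetLike.coe_sort_coe]
  refine p_dvd_card_of_mem (Subgroup.mem_inf.mpr ⟨hxU, mem_cjS.mpr ?_⟩) hox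
  rwa [show g * x * g⁻¹ = cj g⁻¹ x by rw [cj, inv_inv]]

/-- Connectivity implies the normalizers of nontrivial subgroups of `P` generate. -/
lemma MM_top_of_connected (hp : p.Prime) [Fact p.Prime] (P : Sylow p G) {z : G}
    (hzP : z ∈ (P : Subgroup G)) (hoz : orderOf z = p)
    (hzc : ∀ q ∈ (P : Subgroup G), z * q = q * z) (hPb : (P : Subgroup G) ≠ ⊥)
    (hconn : (commGraph {x : G | orderOf x = p}).Connected) : MM p P = ⊤ := by
  rw [Subgroup.eq_top_iff']
  intro g
  have hogz : orderOf (cj g z) = p := by rw [orderOf_cj]; exact hoz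
  have hw : rel p z (cj g z) := rel_def.mpr ⟨hoz, hogz, hconn.preconnected _ _⟩
  have hstep : ∃ m ∈ MM p P, cj m (cj g z) ∈ (P : Subgroup G) := by
    refine rel.rec' (C := fun w => ∃ m ∈ MM p P, cj m w ∈ (P : Subgroup G)) ?_ hw ?_
    · intro u v hou hov hcomm hu
      exact crux_step hp P hPb hou hov hcomm hu
    · exact ⟨1, Subgroup.one_mem _, by rw [cj_one]; exact hzP⟩
  obtain ⟨m, hmM, hvP⟩ := hstep
  set v := cj m (cj g z) with hv
  have hov : orderOf v = p := by rw [hv, orderOf_cj, orderOf_cj]; exact hoz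
  have hvb : Subgroup.zpowers v ≠ ⊥ :=
    fun hh => ne_one_of_orderOf hp hov (Subgroup.zpowers_eq_bot.mp hh)
  obtain ⟨m₂, hm₂M, hQ'P, hT⟩ :=
    fully_normalized P hPb hvb (Subgroup.zpowers_le.mpr hvP)
  set N' : Subgroup G := Subgroup.normalizer (cjS m₂ (Subgroup.zpowers v) : Set G) with hN'
  have hN'M : N' ≤ MM p P := norm_le_MM (fun hh => hvb (cjS_eq_bot.mp hh)) hQ'P
  set k := g * m * m₂ with hk
  have hvk : cj k z = cj m₂ v := by rw [hk, hv, cj_cj, cj_cj, mul_assoc]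
  have hPk : cjS k (P : Subgroup G) ≤ N' := by
    have hPz : (P : Subgroup G) ≤ Subgroup.normalizer (Subgroup.zpowers z : Set G) :=
      fun a ha => mem_normalizer_zpowers_of_commute (hzc a ha)
    calc cjS k (P : Subgroup G) ≤ cjS k (Subgroup.normalizer (Subgroup.zpowers z : Set G)) := cjS_mono _ hPz
      _ = Subgroup.normalizer (cjS k (Subgroup.zpowers z) : Set G) := (normalizer_cjS _ _).symm
      _ = N' := by rw [hN', cjS_zpowers, cjS_zpowers, hvk]
  have hSp : IsPGroup p (cjS k (P : Subgroup G)) := P.2.map _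
  obtain ⟨n, hnN, hn⟩ := conj_into (inf_le_right : (P : Subgroup G) ⊓ N' ≤ N') hT hSp hPk
  have hle : cjS (k * n) (P : Subgroup G) ≤ (P : Subgroup G) := by
    rw [← cjS_cjS]
    exact le_trans (cjS_le_iff.mpr hn) inf_le_left
  have heq : cjS (k * n) (P : Subgroup G) = (P : Subgroup G) :=
    eq_of_le_of_card_le' hle (by rw [card_cjS])
  have hkn : k * n ∈ Subgroup.normalizer ((P : Subgroup G) : Set G) := mem_normalizer_of_cjS_eq heq
  have hknM : k * n ∈ MM p P := norm_le_MM hPb le_rfl hkn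
  have hkM : k ∈ MM p P := by
    have := Subgroup.mul_mem _ hknM (Subgroup.inv_mem _ (hN'M hnN))
    rwa [mul_inv_cancel_right] at this
  have : g = k * m₂⁻¹ * m⁻¹ := by rw [hk]; group
  rw [this]
  exact Subgroup.mul_mem _ (Subgroup.mul_mem _ hkM (Subgroup.inv_mem _ hm₂M))
    (Subgroup.inv_mem _ hmM)


end BenderAux

open BenderAux

/-- (Bender) For a finite group `G`, a prime `p` dividing `|G|` and a Sylow `p`-subgroup `P`,
the following are equivalent: (a) the commuting graph on the elements of order `p` is
connected; (b) `G` has no strongly `p`-embedded subgroup; (c) `G` is generated by the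
normalizers of the nontrivial subgroups of `P`. -/
theorem commGraph_connected_iff_no_stronglyPEmbedded
    {G : Type*} [Group G] [Finite G] (p : ℕ) (hp : p.Prime)
    (hdvd : p ∣ Nat.card G) (P : Sylow p G) :
    ((commGraph {x : G | orderOf x = p}).Connected ↔
        ¬ ∃ U : Subgroup G, IsStronglyPEmbedded p U) ∧
    ((¬ ∃ U : Subgroup G, IsStronglyPEmbedded p U) ↔
        (⨆ Y ∈ {Y : Subgroup G | Y ≠ ⊥ ∧ Y ≤ (P : Subgroup G)}, Subgroup.normalizer (Y : Set G)) = ⊤) := by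
  classical
  haveI : Fact p.Prime := ⟨hp⟩
  have hnt : Nontrivial (P : Subgroup G) := by
    rw [← Finite.one_lt_card_iff_nontrivial, Sylow.card_eq_multiplicity]
    exact Nat.one_lt_pow (hp.factorization_pos_of_dvd Nat.card_pos.ne' hdvd).ne' hp.one_lt
  obtain ⟨z, hzP, hoz, hzc⟩ := exists_central_orderOf hp P.2 hnt
  have hPb : (P : Subgroup G) ≠ ⊥ := by
    intro hh
    rw [hh] at hzP
    exact ne_one_of_orderOf hp hoz (Subgroup.mem_bot.mp hzP)
  have hMMeq : (⨆ Y ∈ {Y : Subgroup G | Y ≠ ⊥ ∧ Y ≤ (P : Subgroup G)}, Subgroup.normalizer (Y : Set G))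
      = MM p P := rfl
  have htopc : relStab p z = ⊤ → (commGraph {x : G | orderOf x = p}).Connected :=
    connected_of_relStab_top hp P hzP hoz
  have hembC : ¬ (commGraph {x : G | orderOf x = p}).Connected →
      IsStronglyPEmbedded p (relStab p z) :=
    fun hnc => relStab_embedded hp P hzP hoz hzc (fun h => hnc (htopc h))
  have hconn_of_no : (¬ ∃ U : Subgroup G, IsStronglyPEmbedded p U) →
      (commGraph {x : G | orderOf x = p}).Connected := by
    intro hno
    by_contra hnc
    exact hno ⟨_, hembC hnc⟩
  constructor
  · constructor
    · rintro hc ⟨U, hU⟩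
      exact not_connected_of_embedded hp hU hc
    · exact hconn_of_no
  · constructor
    · intro hno
      rw [hMMeq]
      exact MM_top_of_connected hp P hzP hoz hzc hPb (hconn_of_no hno)
    · rintro htop ⟨U, hU⟩
      have hnc := not_connected_of_embedded hp hU
      have hH : relStab p z = ⊤ := by
        rw [hMMeq] at htop
        exact eq_top_iff.mpr (htop ▸ MM_le_relStab hp P hzP hoz)
      exact hnc (htopc hH)
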